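/- Let P be a well-founded partially ordered set. Then the set of all finite antichains of P, ordered by refinement (X ⊑ Y iff for every x ∈ X there exists y ∈ Y with x ≤ y), is well-founded. -/

import Mathlib

/-- `X` refines `Y`: every element of `X` lies below some element of `Y`. -/
def FinsetRefines {P : Type*} [PartialOrder P] (X Y : Finset P) : Prop :=
  ∀ x ∈ X, ∃ y ∈ Y, x ≤ y

open Relation Multiset

/-- If every element of `Y` is strictly below some element of the nonempty multiset `Z`,
then `Y` is below `Z` in the transitive closure of `CutExpand (· < ·)`. -/
private lemma transGen_cutExpand_of_dominated {α : Type*} [Preorder α] :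
    ∀ (Z Y : Multiset α), Z ≠ 0 → (∀ y ∈ Y, ∃ z ∈ Z, y < z) →
      Relation.TransGen (CutExpand ((· < ·) : α → α → Prop)) Y Z := by
  classical
  intro Z
  induction Z using Multiset.induction with
  | empty => intro Y h; exact absurd rfl h
  | cons x Z' ih =>
    intro Y _ hY
    by_cases hZ' : Z' = (0 : Multiset α)
    · subst hZ'
      refine Relation.TransGen.single ?_
      have : (x ::ₘ (0 : Multiset α)) = ({x} : Multiset α) := rfl
      rw [this]
      refine cutExpand_singleton fun y hy => ?_
      obtain ⟨z, hz, hlt⟩ := hY y hy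
      rw [Multiset.mem_cons] at hz
      rcases hz with rfl | hz
      · exact hlt
      · simp at hz
    · set Y₁ := Y.filter (fun y => ∃ z ∈ Z', y < z) with hY₁def
      set Y₂ := Y.filter (fun y => ¬ ∃ z ∈ Z', y < z) with hY₂def
      have hsplit : Y₁ + Y₂ = Y := Multiset.filter_add_not _ Y
      have step1 : Relation.TransGen (CutExpand ((· < ·) : α → α → Prop))
          (Y₁ + Y₂) (Z' + Y₂) := by
        have base : Relation.TransGen (CutExpand ((· < ·) : α → α → Prop)) Y₁ Z' :=
          ih Y₁ hZ' (fun y hy => (Multiset.mem_filter.mp hy).2)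
        exact Relation.TransGen.lift (fun s => s + Y₂)
          (fun a b hab => (cutExpand_add_right Y₂).mpr hab) _ _ base
      have step2 : CutExpand ((· < ·) : α → α → Prop) (Z' + Y₂) (Z' + {x}) := by
        refine (cutExpand_add_left Z').mpr (cutExpand_singleton fun y hy => ?_)
        have hy' := Multiset.mem_filter.mp hy
        obtain ⟨z, hz, hlt⟩ := hY y hy'.1
        rw [Multiset.mem_cons] at hz
        rcases hz with rfl | hz
        · exact hlt
        · exact absurd ⟨z, hz, hlt⟩ hy'.2
      have hfin : Z' + ({x} : Multiset α) = x ::ₘ Z' := by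
        rw [add_comm, Multiset.singleton_add]
      rw [hsplit] at step1
      rw [hfin] at step2
      exact Relation.TransGen.tail step1 step2

/-- The set of all finite antichains of `P`, ordered by refinement, is well-founded
whenever `P` is a well-founded partially ordered set. -/
theorem finite_antichains_wellFounded {P : Type*} [PartialOrder P]
    (hwf : WellFoundedLT P) :
    WellFounded (fun X Y : {X : Finset P // IsAntichain (· ≤ ·) (X : Set P)} =>
      FinsetRefines X.1 Y.1 ∧ ¬ FinsetRefines Y.1 X.1) := by
  classical
  have wfT : WellFounded (Relation.TransGen (CutExpand ((· < ·) : P → P → Prop))) :=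
    hwf.wf.cutExpand.transGen
  refine Subrelation.wf ?_ (InvImage.wf (fun A => A.1.val) wfT)
  rintro A B ⟨href, hnref⟩
  -- decompose the multisets
  set C : Multiset P := A.1.val.filter (fun a => a ∈ B.1) with hC
  set Yd : Multiset P := A.1.val.filter (fun a => ¬ a ∈ B.1) with hYd
  set C' : Multiset P := B.1.val.filter (fun a => a ∈ A.1) with hC'
  set Zd : Multiset P := B.1.val.filter (fun a => ¬ a ∈ A.1) with hZd
  have hCC' : C = C' := by
    rw [(Multiset.Nodup.filter _ A.1.nodup).ext (Multiset.Nodup.filter _ B.1.nodup)]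
    intro a
    simp only [Multiset.mem_filter, hC, hC']
    constructor
    · rintro ⟨h1, h2⟩; exact ⟨h2, h1⟩
    · rintro ⟨h1, h2⟩; exact ⟨h2, h1⟩
  have hA : A.1.val = C + Yd := (Multiset.filter_add_not _ _).symm
  have hB : B.1.val = C + Zd := by
    rw [hCC']; exact (Multiset.filter_add_not _ _).symm
  have hZne : Zd ≠ 0 := by
    simp only [FinsetRefines, not_forall] at hnref
    obtain ⟨x, hxB, hx⟩ := hnref
    have hxA : x ∉ A.1 := fun h => hx ⟨x, h, le_refl x⟩
    have : x ∈ Zd := Multiset.mem_filter.mpr ⟨hxB, hxA⟩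
    exact fun h0 => by simp [h0] at this
  have hdom : ∀ y ∈ Yd, ∃ z ∈ Zd, y < z := by
    intro y hy
    obtain ⟨hyA, hyB⟩ := Multiset.mem_filter.mp hy
    obtain ⟨x, hxB, hle⟩ := href y hyA
    have hne : y ≠ x := fun h => hyB (h ▸ hxB)
    have hlt : y < x := lt_of_le_of_ne hle hne
    have hyA' : y ∈ A.1 := Finset.mem_def.mpr hyA
    have hxA : x ∉ A.1 := fun hxA =>
      A.2 (Finset.mem_coe.mpr hyA') (Finset.mem_coe.mpr hxA) hne hle
    exact ⟨x, Multiset.mem_filter.mpr ⟨hxB, hxA⟩, hlt⟩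
  show Relation.TransGen (CutExpand ((· < ·) : P → P → Prop)) A.1.val B.1.val
  rw [hA, hB]
  exact Relation.TransGen.lift (fun s => C + s)
    (fun a b hab => (cutExpand_add_left C).mpr hab)
    _ _ (transGen_cutExpand_of_dominated Zd Yd hZne hdom)
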